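/- Let m ≥ 3/2 be a half-integer and 0 ≤ χ < 2π. The solution space of the recurrence −i e^{iχ} √((m+t)(m+t+1)) d_{t+1} + i e^{−iχ} √((m−t)(m−t+1)) d_{t−1} = 0 for t ∈ {−m, …, m} (with d_t = 0 for |t| ≥ m+1) is two-dimensional, spanned by d_t = e^{i(m−t)χ} · binom(2m, m−t)^{1/2} and d_t = (−1)^{m−t} e^{i(m−t)χ} · binom(2m, m−t)^{1/2}. -/

import Mathlib

/-- The eigenvector `e_t = e^{i(m−t)χ} binom(2m, m−t)^{1/2}`, encoded with `m = M/2`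
(`M` odd), `t = k − m`, so that `m − t = M − k` and `binom(2m, m−t) = binom(M, M−k)`. -/
noncomputable def evec (M : ℕ) (χ : ℝ) (k : ℤ) : ℂ :=
  if 0 ≤ k ∧ k ≤ (M : ℤ) then
    Complex.exp (Complex.I * (((M : ℝ) - (k : ℝ) : ℝ) : ℂ) * (χ : ℂ)) *
      (Real.sqrt (Nat.choose M ((M : ℤ) - k).toNat) : ℂ)
  else 0

lemma nat_id (M k i : ℕ) (h : k + i + 1 = M) :
    (i+1)*(i+2) * Nat.choose M (i+2) = k*(k+1) * Nat.choose M i := by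
  have hk1 : M - (i+1) = k := by omega
  have hk2 : M - i = k + 1 := by omega
  calc (i+1)*(i+2) * Nat.choose M (i+2)
      = (i+1) * (Nat.choose M (i+1+1) * (i+1+1)) := by ring
    _ = (i+1) * (Nat.choose M (i+1) * k) := by rw [Nat.choose_succ_right_eq, hk1]
    _ = k * (Nat.choose M (i+1) * (i+1)) := by ring
    _ = k * (Nat.choose M i * (k+1)) := by rw [Nat.choose_succ_right_eq, hk2]
    _ = k*(k+1)*Nat.choose M i := by ring

lemma sqrt_id (M k i : ℕ) (h : k + i + 1 = M) :
    Real.sqrt ((k:ℝ)*((k:ℝ)+1)) * Real.sqrt (Nat.choose M i)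
      = Real.sqrt (((i:ℝ)+1)*((i:ℝ)+2)) * Real.sqrt (Nat.choose M (i+2)) := by
  rw [← Real.sqrt_mul (by positivity), ← Real.sqrt_mul (by positivity)]
  congr 1
  have := nat_id M k i h

  have : (((i+1)*(i+2) * Nat.choose M (i+2) : ℕ) : ℝ) = ((k*(k+1) * Nat.choose M i : ℕ) : ℝ) := by
    exact_mod_cast this
  push_cast at this
  linarith

lemma evec_nat (M : ℕ) (χ : ℝ) (n : ℕ) (h : n ≤ M) :
    evec M χ (n : ℤ) = Complex.exp (Complex.I * ((M - n : ℕ) : ℂ) * (χ : ℂ)) *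
      (Real.sqrt (Nat.choose M (M - n)) : ℂ) := by
  rw [evec, if_pos ⟨Int.ofNat_nonneg n, by exact_mod_cast h⟩]
  have h1 : ((M : ℤ) - (n : ℤ)).toNat = M - n := by omega
  have h2 : (((M : ℝ) - ((n:ℤ) : ℝ) : ℝ) : ℂ) = ((M - n : ℕ) : ℂ) := by push_cast [h]; ring
  rw [h1, h2]

/-- The second eigenvector `f_t = (−1)^{m−t} e_t`. -/
noncomputable def fvec (M : ℕ) (χ : ℝ) (k : ℤ) : ℂ :=
  (-1 : ℂ) ^ ((M : ℤ) - k) * evec M χ k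

/-- `d` solves the recurrence
`−i e^{iχ} √((m+t)(m+t+1)) d_{t+1} + i e^{−iχ} √((m−t)(m−t+1)) d_{t−1} = 0` on `I_m`,
with `d_t = 0` for `|t| ≥ m+1`; here `m + t = k` and `m − t = M − k`. -/
def IsSol8 (M : ℕ) (χ : ℝ) (d : ℤ → ℂ) : Prop :=
  (∀ k : ℤ, (k < 0 ∨ (M : ℤ) < k) → d k = 0) ∧
  ∀ k : ℤ, 0 ≤ k → k ≤ (M : ℤ) →
    -Complex.I * Complex.exp (Complex.I * (χ : ℂ)) *
        (Real.sqrt ((k : ℝ) * ((k : ℝ) + 1)) : ℂ) * d (k + 1)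
      + Complex.I * Complex.exp (-(Complex.I * (χ : ℂ))) *
        (Real.sqrt (((M : ℝ) - (k : ℝ)) * ((M : ℝ) - (k : ℝ) + 1)) : ℂ) * d (k - 1) = 0

lemma evec_out (M : ℕ) (χ : ℝ) (k : ℤ) (h : k < 0 ∨ (M : ℤ) < k) : evec M χ k = 0 := by
  rw [evec, if_neg]; omega

lemma evec_sol (M : ℕ) (χ : ℝ) : IsSol8 M χ (evec M χ) := by
  refine ⟨fun k h => evec_out M χ k h, fun k hk0 hkM => ?_⟩
  lift k to ℕ using hk0 with n
  have hnM : n ≤ M := by exact_mod_cast hkM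
  rcases Nat.eq_zero_or_pos n with hn0 | hn1
  · -- k = 0 : first sqrt is 0, d (k-1) = 0
    subst hn0
    have h2 : evec M χ (((0:ℕ):ℤ) - 1) = 0 := evec_out M χ _ (by omega)
    rw [h2]
    push_cast
    norm_num
  rcases eq_or_lt_of_le hnM with hnMeq | hnMlt
  · -- k = M : second sqrt is 0, d (k+1) = 0
    have h2 : evec M χ ((n:ℤ) + 1) = 0 := evec_out M χ _ (by omega)
    have h1 : ((M:ℝ) - ((n:ℤ):ℝ)) * ((M:ℝ) - ((n:ℤ):ℝ) + 1) = 0 := by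
      push_cast [hnMeq]; ring
    rw [h2, h1, Real.sqrt_zero]
    push_cast
    norm_num
  -- 1 ≤ n, n < M
  obtain ⟨i, hi⟩ : ∃ i, n + i + 1 = M := ⟨M - n - 1, by omega⟩
  have e1 : ((n:ℤ) + 1) = ((n+1 : ℕ) : ℤ) := by push_cast; ring
  have e2 : ((n:ℤ) - 1) = ((n-1 : ℕ) : ℤ) := by omega
  rw [e1, e2, evec_nat M χ (n+1) (by omega), evec_nat M χ (n-1) (by omega)]
  have hi1 : M - (n+1) = i := by omega
  have hi2 : M - (n-1) = i + 2 := by omega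
  rw [hi1, hi2]
  have hMn : ((M:ℝ) - ((n:ℤ):ℝ)) * ((M:ℝ) - ((n:ℤ):ℝ) + 1) = ((i:ℝ)+1) * ((i:ℝ)+2) := by
    have : (M:ℝ) = (n:ℝ) + (i:ℝ) + 1 := by exact_mod_cast congrArg (Nat.cast : ℕ → ℝ) hi.symm
    push_cast [this]; ring
  rw [hMn]
  have hsC : (Real.sqrt ((n:ℝ)*((n:ℝ)+1)) : ℂ) * (Real.sqrt (Nat.choose M i) : ℂ)
      = (Real.sqrt (((i:ℝ)+1)*((i:ℝ)+2)) : ℂ) * (Real.sqrt (Nat.choose M (i+2)) : ℂ) := by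
    exact_mod_cast congrArg (Complex.ofReal) (sqrt_id M n i hi)
  have hexp : Complex.exp (Complex.I * (χ:ℂ)) * Complex.exp (Complex.I * ((i:ℕ):ℂ) * (χ:ℂ))
      = Complex.exp (-(Complex.I * (χ:ℂ))) * Complex.exp (Complex.I * ((i+2:ℕ):ℂ) * (χ:ℂ)) := by
    rw [← Complex.exp_add, ← Complex.exp_add]
    congr 1
    push_cast
    ring
  push_cast at hsC hexp ⊢
  linear_combination (-Complex.I * (Complex.exp (Complex.I * (χ:ℂ)) * Complex.exp (Complex.I * ((i:ℕ):ℂ) * (χ:ℂ)))) * hsC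
    + (-Complex.I * ((Real.sqrt (((i:ℝ)+1)*((i:ℝ)+2)) : ℂ) * (Real.sqrt (Nat.choose M (i+2)) : ℂ))) * hexp

lemma fvec_sol (M : ℕ) (χ : ℝ) : IsSol8 M χ (fvec M χ) := by
  refine ⟨fun k h => by simp [fvec, evec_out M χ k h], fun k hk0 hkM => ?_⟩
  have hne : (-1 : ℂ) ≠ 0 := by norm_num
  have p1 : (-1:ℂ) ^ ((M:ℤ) - (k+1)) = -((-1:ℂ) ^ ((M:ℤ) - k)) := by
    rw [show ((M:ℤ) - (k+1)) = ((M:ℤ) - k) - 1 by ring, zpow_sub₀ hne, zpow_one]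
    field_simp
  have p2 : (-1:ℂ) ^ ((M:ℤ) - (k-1)) = -((-1:ℂ) ^ ((M:ℤ) - k)) := by
    rw [show ((M:ℤ) - (k-1)) = ((M:ℤ) - k) + 1 by ring, zpow_add₀ hne, zpow_one]
    ring
  simp only [fvec, p1, p2]
  linear_combination (-((-1:ℂ) ^ ((M:ℤ) - k))) * (evec_sol M χ).2 k hk0 hkM

lemma comb_sol {M : ℕ} {χ : ℝ} {d d' : ℤ → ℂ} (hd : IsSol8 M χ d) (hd' : IsSol8 M χ d')
    (a b : ℂ) : IsSol8 M χ (fun k => a * d k + b * d' k) := by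
  refine ⟨fun k h => by simp [hd.1 k h, hd'.1 k h], fun k h0 h1 => ?_⟩
  have H1 := hd.2 k h0 h1
  have H2 := hd'.2 k h0 h1
  simp only
  linear_combination a * H1 + b * H2

lemma sol_zero {M : ℕ} {χ : ℝ} {d : ℤ → ℂ} (hd : IsSol8 M χ d)
    (h0 : d 0 = 0) (h1 : d 1 = 0) : ∀ k, d k = 0 := by
  have key : ∀ n : ℕ, d n = 0 := by
    intro n
    induction n using Nat.strong_induction_on with
    | _ n ih =>
      match n with
      | 0 => exact_mod_cast h0
      | 1 => exact_mod_cast h1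
      | (n+2) =>
        by_cases hn : ((n:ℤ) + 2) ≤ M
        · have hrec := hd.2 ((n:ℤ)+1) (by omega) (by omega)
          have hz : d ((n:ℤ)+1-1) = 0 := by
            rw [show ((n:ℤ)+1-1) = ((n:ℕ):ℤ) by ring]
            exact ih n (by omega)
          rw [hz, show ((n:ℤ)+1+1) = (((n+2:ℕ)):ℤ) by push_cast; ring] at hrec
          have hA : -Complex.I * Complex.exp (Complex.I * (χ:ℂ)) *
              (Real.sqrt ((((n:ℤ)+1 : ℤ):ℝ) * ((((n:ℤ)+1 : ℤ):ℝ) + 1)) : ℂ) ≠ 0 := by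
            apply mul_ne_zero (mul_ne_zero (by simpa using Complex.I_ne_zero)
              (Complex.exp_ne_zero _))
            rw [Complex.ofReal_ne_zero]
            apply ne_of_gt
            apply Real.sqrt_pos.2
            push_cast
            positivity
          rw [mul_zero, add_zero] at hrec
          exact (mul_eq_zero.mp hrec).resolve_left hA
        · exact hd.1 _ (by push_cast; omega)
  intro k
  rcases lt_or_ge k 0 with hk | hk
  · exact hd.1 k (Or.inl hk)
  · lift k to ℕ using hk; exact key k

lemma evec_zero (M : ℕ) (χ : ℝ) : evec M χ 0 = Complex.exp (Complex.I * (M:ℂ) * (χ:ℂ)) := by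
  have := evec_nat M χ 0 (Nat.zero_le M)
  simpa [Nat.choose_self] using this

lemma evec_one (M : ℕ) (χ : ℝ) (hM : 1 ≤ M) :
    evec M χ 1 = Complex.exp (Complex.I * ((M - 1 : ℕ):ℂ) * (χ:ℂ)) * (Real.sqrt M : ℂ) := by
  have := evec_nat M χ 1 hM
  have hc : Nat.choose M (M - 1) = M := by
    rw [Nat.choose_symm hM, Nat.choose_one_right]
  rw [hc] at this
  exact_mod_cast this

lemma evec_zero_ne (M : ℕ) (χ : ℝ) : evec M χ 0 ≠ 0 := by
  rw [evec_zero]; exact Complex.exp_ne_zero _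

lemma evec_one_ne (M : ℕ) (χ : ℝ) (hM : 1 ≤ M) : evec M χ 1 ≠ 0 := by
  rw [evec_one M χ hM]
  apply mul_ne_zero (Complex.exp_ne_zero _)
  rw [Complex.ofReal_ne_zero]
  apply ne_of_gt
  apply Real.sqrt_pos.2
  exact_mod_cast hM

lemma fvec_zero (M : ℕ) (hModd : Odd M) (χ : ℝ) : fvec M χ 0 = -evec M χ 0 := by
  rw [fvec, show ((M:ℤ) - 0) = ((M:ℕ):ℤ) by ring, zpow_natCast, hModd.neg_one_pow]
  ring

lemma fvec_one (M : ℕ) (hModd : Odd M) (hM : 1 ≤ M) (χ : ℝ) : fvec M χ 1 = evec M χ 1 := by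
  have hev : Even (M - 1) := Nat.Odd.sub_odd hModd odd_one
  rw [fvec, show ((M:ℤ) - 1) = ((M - 1 : ℕ):ℤ) by omega, zpow_natCast, hev.neg_one_pow]
  ring

/-- the solution space is two-dimensional, spanned by `evec` and `fvec`. -/
theorem stmt8 (M : ℕ) (hModd : Odd M) (hM : 3 ≤ M) (χ : ℝ) (hχ0 : 0 ≤ χ)
    (hχ1 : χ < 2 * Real.pi) :
    (∀ d : ℤ → ℂ, IsSol8 M χ d ↔
      ∃ a b : ℂ, ∀ k : ℤ, d k = a * evec M χ k + b * fvec M χ k) ∧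
    LinearIndependent ℂ ![evec M χ, fvec M χ] := by
  have hM1 : 1 ≤ M := by omega
  have he0 := evec_zero_ne M χ
  have he1 := evec_one_ne M χ hM1
  have hf0 := fvec_zero M hModd χ
  have hf1 := fvec_one M hModd hM1 χ
  constructor
  · intro d
    constructor
    · intro hd
      set u := d 0 / evec M χ 0 with hu
      set v := d 1 / evec M χ 1 with hv
      refine ⟨(u + v) / 2, (v - u) / 2, ?_⟩
      have hcomb : IsSol8 M χ (fun k => ((u+v)/2) * evec M χ k + ((v-u)/2) * fvec M χ k) :=
        comb_sol (evec_sol M χ) (fvec_sol M χ) _ _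
      have hg : IsSol8 M χ (fun k => (1:ℂ) * d k +
          (-1) * (((u+v)/2) * evec M χ k + ((v-u)/2) * fvec M χ k)) :=
        comb_sol hd hcomb 1 (-1)
      have hu0 : u * evec M χ 0 = d 0 := div_mul_cancel₀ _ he0
      have hv1 : v * evec M χ 1 = d 1 := div_mul_cancel₀ _ he1
      have g0 : (1:ℂ) * d 0 + (-1) * (((u+v)/2) * evec M χ 0 + ((v-u)/2) * fvec M χ 0) = 0 := by
        rw [hf0]; linear_combination -hu0
      have g1 : (1:ℂ) * d 1 + (-1) * (((u+v)/2) * evec M χ 1 + ((v-u)/2) * fvec M χ 1) = 0 := by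
        rw [hf1]; linear_combination -hv1
      intro k
      have := sol_zero hg g0 g1 k
      linear_combination this
    · rintro ⟨a, b, h⟩
      have : d = fun k => a * evec M χ k + b * fvec M χ k := funext h
      rw [this]
      exact comb_sol (evec_sol M χ) (fvec_sol M χ) a b
  · rw [LinearIndependent.pair_iff]
    intro s t hst
    have h0 := congrFun hst 0
    have h1 := congrFun hst 1
    simp only [Matrix.cons_val_zero, Matrix.cons_val_one, Matrix.head_cons, Pi.add_apply,
      Pi.smul_apply, smul_eq_mul, Pi.zero_apply] at h0 h1
    rw [hf0] at h0
    rw [hf1] at h1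
    have hA : (s - t) * evec M χ 0 = 0 := by linear_combination h0
    have hB : (s + t) * evec M χ 1 = 0 := by linear_combination h1
    have hA' : s - t = 0 := (mul_eq_zero.mp hA).resolve_right he0
    have hB' : s + t = 0 := (mul_eq_zero.mp hB).resolve_right he1
    constructor
    · linear_combination (hA' + hB') / 2
    · linear_combination (hB' - hA') / 2
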